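/- Let F be analytic on ℂ₊ and let A, B, γ, ν > 0. Assume: (i) |F(z)| ≤ A for all z ∈ ℂ₊; (ii) |F(t)| ≤ A·e^{-γ/t} for all real t with 0 < t ≤ γ; (iii) |F(z)| ≤ B·((Re z)/(4γ))^{-ν/2} for all z in the disk 𝒞_γ = {z ∈ ℂ \ {0} : Re(γ/z) ≥ 1}. Then |F(z)| ≤ e·B·(2γ/|z|)^ν·exp(-Re(γ/z)) for all z ∈ 𝒞_γ. -/

import Mathlib

open Complex Filter

/-- Let `F` be analytic on the open right half-plane `ℂ₊` and `A, B, γ, ν > 0`.  Assume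
(i) `|F(z)| ≤ A` on `ℂ₊`; (ii) `|F(t)| ≤ A·e^{-γ/t}` for real `0 < t ≤ γ`;
(iii) `|F(z)| ≤ B·((Re z)/(4γ))^{-ν/2}` on the disk `𝒞_γ = {z ≠ 0 : Re(γ/z) ≥ 1}`.
Then `|F(z)| ≤ e·B·(2γ/|z|)^ν·exp(-Re(γ/z))` for all `z ∈ 𝒞_γ`. -/
theorem phragmen_lindelof_disk
    (F : ℂ → ℂ) (A B γ ν : ℝ)
    (hA : 0 < A) (hB : 0 < B) (hγ : 0 < γ) (hν : 0 < ν)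
    (hF : DifferentiableOn ℂ F {z : ℂ | 0 < z.re})
    (h1 : ∀ z : ℂ, 0 < z.re → ‖F z‖ ≤ A)
    (h2 : ∀ t : ℝ, 0 < t → t ≤ γ → ‖F t‖ ≤ A * Real.exp (-γ / t))
    (h3 : ∀ z : ℂ, z ≠ 0 → 1 ≤ ((γ : ℂ) / z).re →
      ‖F z‖ ≤ B * (z.re / (4 * γ)) ^ (-(ν / 2))) :
    ∀ z : ℂ, z ≠ 0 → 1 ≤ ((γ : ℂ) / z).re →
      ‖F z‖ ≤ Real.exp 1 * B * (2 * γ / ‖z‖) ^ ν * Real.exp (-(((γ : ℂ) / z).re)) := by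
  have hγ0 : (γ : ℂ) ≠ 0 := Complex.ofReal_ne_zero.mpr hγ.ne'
  set f : ℂ → ℂ :=
    fun ζ => F ((γ : ℂ) / (1 + ζ)) * Complex.exp (1 + ζ) * (2 * (1 + ζ)) ^ (-ν : ℂ) with hfdef
  have hw_re : ∀ ζ : ℂ, (1 + ζ).re = 1 + ζ.re := by intro ζ; simp
  have hw_ne : ∀ ζ : ℂ, 0 ≤ ζ.re → (1 + ζ) ≠ 0 := by
    intro ζ hζ h
    have h0 : (1 + ζ).re = 0 := by rw [h]; simp
    rw [hw_re] at h0; linarith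
  have hre_div : ∀ w : ℂ, ((γ : ℂ) / w).re = γ * w.re / Complex.normSq w := by
    intro w; simp [Complex.div_re]
  have hz0re : ∀ ζ : ℂ, 0 ≤ ζ.re → 0 < ((γ : ℂ) / (1 + ζ)).re := by
    intro ζ hζ
    rw [hre_div, hw_re]
    have hns : 0 < Complex.normSq (1 + ζ) := Complex.normSq_pos.mpr (hw_ne ζ hζ)
    have : 0 < 1 + ζ.re := by linarith
    positivity
  -- formula for the norm of f
  have hnorm : ∀ ζ : ℂ, ‖f ζ‖ = ‖F ((γ : ℂ) / (1 + ζ))‖ * Real.exp (1 + ζ.re) *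
      ‖2 * (1 + ζ)‖ ^ (-ν) := by
    intro ζ
    have hcast : ((-ν : ℝ) : ℂ) = (-ν : ℂ) := by push_cast; ring
    rw [hfdef]
    simp only [norm_mul, Complex.norm_exp]
    rw [← hcast, norm_cpow_real, hw_re, norm_mul]
  -- the main Phragmén–Lindelöf bound
  have key : ∀ ζ : ℂ, 0 ≤ ζ.re → ‖f ζ‖ ≤ Real.exp 1 * B := by
    intro ζ hζ
    refine PhragmenLindelof.right_half_plane_of_bounded_on_real ?_ ?_ ?_ ?_ hζ
    · -- differentiability
      have hdiff : DifferentiableOn ℂ f {ζ : ℂ | 0 ≤ ζ.re} := by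
        intro ξ hξ
        have hξ' : 0 ≤ ξ.re := hξ
        have h1ξ : (1 + ξ) ≠ 0 := hw_ne ξ hξ'
        have hz0 : 0 < ((γ : ℂ) / (1 + ξ)).re := hz0re ξ hξ'
        apply DifferentiableAt.differentiableWithinAt
        have hg : DifferentiableAt ℂ (fun ζ : ℂ => (γ : ℂ) / (1 + ζ)) ξ :=
          (differentiableAt_const _).div ((differentiableAt_const _).add differentiableAt_id) h1ξ
        have hFd : DifferentiableAt ℂ F ((γ : ℂ) / (1 + ξ)) :=
          hF.differentiableAt ((isOpen_lt continuous_const Complex.continuous_re).mem_nhds hz0)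
        have hgd : DifferentiableAt ℂ (fun ζ : ℂ => 2 * (1 + ζ)) ξ :=
          (differentiableAt_const _).mul ((differentiableAt_const _).add differentiableAt_id)
        refine ((hFd.comp ξ hg).mul
          (((differentiableAt_const _).add differentiableAt_id).cexp)).mul ?_
        refine hgd.cpow (differentiableAt_const _) ?_
        refine Complex.mem_slitPlane_iff.mpr (Or.inl ?_)
        have : (2 * (1 + ξ)).re = 2 * (1 + ξ.re) := by
          simp [Complex.mul_re, Complex.add_re]
        rw [this]; linarith
      exact ⟨hdiff.mono fun z (hz : 0 < z.re) => le_of_lt hz,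
        by rw [closure_setOf_lt_re]; exact hdiff.continuousOn⟩
    · -- growth bound
      refine ⟨1, one_lt_two, 1, Asymptotics.IsBigO.of_bound (A * Real.exp 1) ?_⟩
      rw [Filter.eventually_inf_principal]
      refine Filter.Eventually.of_forall fun ξ hξ => ?_
      have hξ' : (0 : ℝ) ≤ ξ.re := le_of_lt hξ
      have habs2 : (1 : ℝ) ≤ ‖2 * (1 + ξ)‖ := by
        have h1 : (1 : ℝ) ≤ (2 * (1 + ξ)).re := by
          have : (2 * (1 + ξ)).re = 2 * (1 + ξ.re) := by
            simp [Complex.mul_re, Complex.add_re]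
          rw [this]; linarith
        exact h1.trans (Complex.re_le_norm _)
      have hpow : ‖2 * (1 + ξ)‖ ^ (-ν) ≤ 1 :=
        Real.rpow_le_one_of_one_le_of_nonpos habs2 (neg_nonpos.mpr hν.le)
      have hFb : ‖F ((γ : ℂ) / (1 + ξ))‖ ≤ A := h1 _ (hz0re ξ hξ')
      have hpow0 : (0 : ℝ) ≤ ‖2 * (1 + ξ)‖ ^ (-ν) := Real.rpow_nonneg (by positivity) _
      have hrhs : ‖Real.exp (1 * ‖ξ‖ ^ (1 : ℝ))‖ = Real.exp (‖ξ‖) := by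
        rw [Real.norm_eq_abs, abs_of_pos (Real.exp_pos _), one_mul, Real.rpow_one]
      rw [hrhs, hnorm]
      have hexp1 : Real.exp (1 + ξ.re) ≤ Real.exp 1 * Real.exp (‖ξ‖) := by
        rw [← Real.exp_add]
        exact Real.exp_le_exp.mpr (by linarith [Complex.re_le_norm ξ])
      calc ‖F ((γ : ℂ) / (1 + ξ))‖ * Real.exp (1 + ξ.re) * ‖2 * (1 + ξ)‖ ^ (-ν)
          ≤ A * (Real.exp 1 * Real.exp (‖ξ‖)) * 1 := by
            refine mul_le_mul (mul_le_mul hFb hexp1 (Real.exp_pos _).le hA.le) hpow hpow0 ?_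
            positivity
        _ = A * Real.exp 1 * Real.exp (‖ξ‖) := by ring
    · -- bounded on the real axis
      refine Filter.isBoundedUnder_of_eventually_le (a := A) ?_
      filter_upwards [Filter.eventually_ge_atTop (0 : ℝ)] with x hx
      have h1x : (0 : ℝ) < 1 + x := by linarith
      set t : ℝ := γ / (1 + x) with htdef
      have ht0 : 0 < t := by positivity
      have htγ : t ≤ γ := by
        rw [htdef]
        exact div_le_self hγ.le (by linarith)
      have hcast : ((γ : ℂ) / (1 + (x : ℂ))) = ((t : ℝ) : ℂ) := by
        rw [htdef]; push_cast; ring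
      have hγt : -γ / t = -(1 + x) := by
        have h : γ / t = 1 + x := by
          rw [htdef, div_div_eq_mul_div, mul_div_cancel_left₀ _ hγ.ne']
        rw [neg_div, h]
      have hFt : ‖F ((γ : ℂ) / (1 + (x : ℂ)))‖ ≤ A * Real.exp (-(1 + x)) := by
        rw [hcast, ← hγt]; exact h2 t ht0 htγ
      have habs2 : (1 : ℝ) ≤ ‖2 * (1 + (x : ℂ))‖ := by
        have h1 : (1 : ℝ) ≤ (2 * (1 + (x : ℂ))).re := by
          have : (2 * (1 + (x : ℂ))).re = 2 * (1 + x) := by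
            simp [Complex.mul_re, Complex.add_re]
          rw [this]; linarith
        exact h1.trans (Complex.re_le_norm _)
      have hpow : ‖2 * (1 + (x : ℂ))‖ ^ (-ν) ≤ 1 :=
        Real.rpow_le_one_of_one_le_of_nonpos habs2 (neg_nonpos.mpr hν.le)
      have hpow0 : (0 : ℝ) ≤ ‖2 * (1 + (x : ℂ))‖ ^ (-ν) :=
        Real.rpow_nonneg (by positivity) _
      rw [hnorm, Complex.ofReal_re]
      calc ‖F ((γ : ℂ) / (1 + (x : ℂ)))‖ * Real.exp (1 + x) *
            ‖2 * (1 + (x : ℂ))‖ ^ (-ν)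
          ≤ (A * Real.exp (-(1 + x)) * Real.exp (1 + x)) * 1 := by
            refine mul_le_mul (mul_le_mul_of_nonneg_right hFt (Real.exp_pos _).le) hpow hpow0 ?_
            positivity
        _ = A := by rw [mul_one, mul_assoc, ← Real.exp_add, neg_add_cancel, Real.exp_zero, mul_one]
    · -- bound on the vertical line
      intro x
      set w : ℂ := 1 + x * I with hwdef
      have hwre : w.re = 1 := by simp [hwdef]
      have hw0 : w ≠ 0 := by
        intro h; rw [h] at hwre; simp at hwre
      have hz0 : (γ : ℂ) / w ≠ 0 := div_ne_zero hγ0 hw0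
      have hback : (γ : ℂ) / ((γ : ℂ) / w) = w := by
        rw [div_div_eq_mul_div, mul_div_cancel_left₀ _ hγ0]
      have hre1 : (1 : ℝ) ≤ ((γ : ℂ) / ((γ : ℂ) / w)).re := by rw [hback, hwre]
      have hFb := h3 _ hz0 hre1
      have hns : 0 < Complex.normSq w := Complex.normSq_pos.mpr hw0
      have hzre : ((γ : ℂ) / w).re = γ / Complex.normSq w := by rw [hre_div, hwre, mul_one]
      set s : ℝ := ‖2 * w‖ with hsdef
      have hs0 : 0 < s := by
        rw [hsdef]; exact norm_pos_iff.mpr (mul_ne_zero two_ne_zero hw0)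
      have hs2 : s ^ (2 : ℕ) = 4 * Complex.normSq w := by
        rw [hsdef, Complex.sq_norm, Complex.normSq_mul]
        norm_num [Complex.normSq_ofNat]
      have hbase : ((γ : ℂ) / w).re / (4 * γ) = ((4 : ℝ) * Complex.normSq w)⁻¹ := by
        rw [hzre]; field_simp
      have hpow_eq : (((γ : ℂ) / w).re / (4 * γ)) ^ (-(ν / 2)) = s ^ ν := by
        rw [hbase, ← hs2, Real.inv_rpow (by positivity), Real.rpow_neg (by positivity), inv_inv]
        rw [← Real.rpow_natCast s 2, ← Real.rpow_mul hs0.le]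
        congr 1
        push_cast
        ring
      have hwre' : (1 : ℝ) + (x * I).re = 1 := by simp
      rw [hnorm, hwre']
      have hzz : (γ : ℂ) / (1 + x * I) = (γ : ℂ) / w := by rw [hwdef]
      have habsz : ‖2 * (1 + x * I)‖ = s := by rw [hsdef, hwdef]
      rw [hzz, habsz]
      have hFb' : ‖F ((γ : ℂ) / w)‖ ≤ B * s ^ ν := by rw [← hpow_eq]; exact hFb
      have hcancel : s ^ ν * s ^ (-ν) = 1 := by
        rw [← Real.rpow_add hs0]; simp
      calc ‖F ((γ : ℂ) / w)‖ * Real.exp 1 * s ^ (-ν)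
          ≤ B * s ^ ν * Real.exp 1 * s ^ (-ν) := by
            have : (0 : ℝ) ≤ s ^ (-ν) := Real.rpow_nonneg hs0.le _
            gcongr
        _ = Real.exp 1 * B * (s ^ ν * s ^ (-ν)) := by ring
        _ = Real.exp 1 * B := by rw [hcancel, mul_one]
  -- conclusion
  intro z hz0 hz1
  set ζ : ℂ := (γ : ℂ) / z - 1 with hζdef
  have hζre : 0 ≤ ζ.re := by
    have : ζ.re = ((γ : ℂ) / z).re - 1 := by rw [hζdef]; simp
    rw [this]; linarith
  have h1ζ : 1 + ζ = (γ : ℂ) / z := by rw [hζdef]; ring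
  have hgz : (γ : ℂ) / (1 + ζ) = z := by
    rw [h1ζ, div_div_eq_mul_div, mul_div_cancel_left₀ _ hγ0]
  have hkey := key ζ hζre
  rw [hnorm, hgz] at hkey
  have hexpe : 1 + ζ.re = ((γ : ℂ) / z).re := by
    have : (1 + ζ).re = 1 + ζ.re := by simp
    rw [← this, h1ζ]
  have hznorm : 0 < ‖z‖ := norm_pos_iff.mpr hz0
  have habs : ‖2 * (1 + ζ)‖ = 2 * γ / ‖z‖ := by
    rw [h1ζ, norm_mul, norm_div, Complex.norm_two, Complex.norm_real, Real.norm_eq_abs, abs_of_pos hγ,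
      mul_div_assoc]
  rw [hexpe, habs] at hkey
  set r : ℝ := 2 * γ / ‖z‖ with hrdef
  have hr0 : 0 < r := by rw [hrdef]; positivity
  have hrcancel : r ^ (-ν) * r ^ ν = 1 := by rw [← Real.rpow_add hr0]; simp
  have hecancel : Real.exp (((γ : ℂ) / z).re) * Real.exp (-(((γ : ℂ) / z).re)) = 1 := by
    rw [← Real.exp_add]; simp
  have hstep : ‖F z‖ = (‖F z‖ * Real.exp (((γ : ℂ) / z).re) * r ^ (-ν)) *
      (r ^ ν * Real.exp (-(((γ : ℂ) / z).re))) := by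
    have : ‖F z‖ * Real.exp (((γ : ℂ) / z).re) * r ^ (-ν) *
        (r ^ ν * Real.exp (-(((γ : ℂ) / z).re))) =
        ‖F z‖ * ((r ^ (-ν) * r ^ ν) *
          (Real.exp (((γ : ℂ) / z).re) * Real.exp (-(((γ : ℂ) / z).re)))) := by ring
    rw [this, hrcancel, hecancel]; ring
  rw [hstep]
  calc (‖F z‖ * Real.exp (((γ : ℂ) / z).re) * r ^ (-ν)) *
        (r ^ ν * Real.exp (-(((γ : ℂ) / z).re)))
      ≤ (Real.exp 1 * B) * (r ^ ν * Real.exp (-(((γ : ℂ) / z).re))) := by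
        have h0 : (0 : ℝ) ≤ r ^ ν * Real.exp (-(((γ : ℂ) / z).re)) := by positivity
        exact mul_le_mul_of_nonneg_right hkey h0
    _ = Real.exp 1 * B * r ^ ν * Real.exp (-(((γ : ℂ) / z).re)) := by ring
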